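/- Let n be an odd positive integer, G a group, and ρ₁, ρ₂ : G → SL(n,ℝ) semisimple group homomorphisms. Let i : SL(n,ℝ) → SL(n+1,ℝ) be the block inclusion g ↦ g ⊕ 1. If there exists P ∈ SL(n+1,ℝ) with P·(i∘ρ₁)(g)·P⁻¹ = (i∘ρ₂)(g) for all g ∈ G, then there exists Q ∈ SL(n,ℝ) with Q·ρ₁(g)·Q⁻¹ = ρ₂(g) for all g ∈ G. -/

import Mathlib

open Matrix

/-- A representation `ρ : G → SL(n,ℝ)` is semisimple if `ℝⁿ` is a semisimple module for
the induced `ℝ[G]`-action, i.e. every `ρ`-invariant subspace admits a `ρ`-invariant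
complement. -/
def IsSemisimpleRep {n : ℕ} {G : Type*} [Group G]
    (ρ : G →* Matrix.SpecialLinearGroup (Fin n) ℝ) : Prop :=
  ∀ W : Submodule ℝ (Fin n → ℝ),
    (∀ g : G, ∀ w ∈ W, (ρ g : Matrix (Fin n) (Fin n) ℝ) *ᵥ w ∈ W) →
      ∃ W' : Submodule ℝ (Fin n → ℝ),
        (∀ g : G, ∀ w ∈ W', (ρ g : Matrix (Fin n) (Fin n) ℝ) *ᵥ w ∈ W') ∧ IsCompl W W'

/-- The block inclusion `SL(n,ℝ) → SL(n+1,ℝ)`, `g ↦ g ⊕ 1`. -/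
def blockInclusion {n : ℕ} (g : Matrix (Fin n) (Fin n) ℝ) :
    Matrix (Fin (n + 1)) (Fin (n + 1)) ℝ :=
  Matrix.reindex finSumFinEquiv finSumFinEquiv
    (Matrix.fromBlocks g 0 0 (1 : Matrix (Fin 1) (Fin 1) ℝ))

lemma blockInclusion_mulVec_castSucc {n : ℕ} (M : Matrix (Fin n) (Fin n) ℝ)
    (w : Fin (n + 1) → ℝ) (j : Fin n) :
    (blockInclusion M *ᵥ w) j.castSucc = (M *ᵥ (w ∘ Fin.castSucc)) j := by
  rw [blockInclusion, reindex_apply, submatrix_mulVec_equiv, Matrix.fromBlocks_mulVec]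
  have h1 : finSumFinEquiv.symm (j.castSucc) = Sum.inl j :=
    finSumFinEquiv_symm_apply_castAdd (n := 1) j
  simp only [Function.comp_apply, h1, Sum.elim_inl, Matrix.zero_mulVec, add_zero,
    Pi.add_apply]
  have h3 : (w ∘ ⇑finSumFinEquiv.symm.symm) ∘ Sum.inl = w ∘ Fin.castSucc := by
    funext k
    simp only [Function.comp_apply, Equiv.symm_symm, finSumFinEquiv_apply_left]
    rfl
  rw [h3]

lemma blockInclusion_mulVec_last {n : ℕ} (M : Matrix (Fin n) (Fin n) ℝ)
    (w : Fin (n + 1) → ℝ) :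
    (blockInclusion M *ᵥ w) (Fin.last n) = w (Fin.last n) := by
  rw [blockInclusion, reindex_apply, submatrix_mulVec_equiv, Matrix.fromBlocks_mulVec]
  simp only [Function.comp_apply, finSumFinEquiv_symm_last, Sum.elim_inr, Matrix.zero_mulVec,
    Matrix.one_mulVec, zero_add, Pi.add_apply]
  have h2 : finSumFinEquiv (Sum.inr (0 : Fin 1)) = Fin.last n := finSumFinEquiv_symm_last.symm ▸
    (Equiv.apply_symm_apply _ _)
  simp [Pi.zero_apply, Equiv.symm_symm, h2]

/-- For `n` odd, if the block inclusions `i∘ρ₁, i∘ρ₂ : G → SL(n+1,ℝ)` of two semisimple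
representations `ρ₁, ρ₂ : G → SL(n,ℝ)` are conjugate in `SL(n+1,ℝ)`, then `ρ₁` and `ρ₂`
are conjugate in `SL(n,ℝ)`. -/
theorem sl_conjugacy_of_block_conjugacy
    (n : ℕ) (hn : 0 < n) (hodd : Odd n) (G : Type*) [Group G]
    (ρ₁ ρ₂ : G →* Matrix.SpecialLinearGroup (Fin n) ℝ)
    (hss₁ : IsSemisimpleRep ρ₁) (hss₂ : IsSemisimpleRep ρ₂)
    (P : Matrix.SpecialLinearGroup (Fin (n + 1)) ℝ)
    (hP : ∀ g : G,
      (P : Matrix (Fin (n + 1)) (Fin (n + 1)) ℝ) * blockInclusion (ρ₁ g : Matrix (Fin n) (Fin n) ℝ) *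
          (P⁻¹ : Matrix.SpecialLinearGroup (Fin (n + 1)) ℝ)
        = blockInclusion (ρ₂ g : Matrix (Fin n) (Fin n) ℝ)) :
    ∃ Q : Matrix.SpecialLinearGroup (Fin n) ℝ, ∀ g : G, Q * ρ₁ g * Q⁻¹ = ρ₂ g := by
  classical
  set Pm : Matrix (Fin (n + 1)) (Fin (n + 1)) ℝ := (P : Matrix (Fin (n + 1)) (Fin (n + 1)) ℝ)
  set Pim : Matrix (Fin (n + 1)) (Fin (n + 1)) ℝ :=
    ((P⁻¹ : Matrix.SpecialLinearGroup (Fin (n + 1)) ℝ) : Matrix (Fin (n + 1)) (Fin (n + 1)) ℝ)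
  have hinv1 : Pim * Pm = 1 := by
    rw [show Pim * Pm = ((P⁻¹ * P : Matrix.SpecialLinearGroup (Fin (n + 1)) ℝ) : Matrix _ _ ℝ)
      from (Matrix.SpecialLinearGroup.coe_mul _ _).symm, inv_mul_cancel,
      Matrix.SpecialLinearGroup.coe_one]
  have hinv2 : Pm * Pim = 1 := by
    rw [show Pm * Pim = ((P * P⁻¹ : Matrix.SpecialLinearGroup (Fin (n + 1)) ℝ) : Matrix _ _ ℝ)
      from (Matrix.SpecialLinearGroup.coe_mul _ _).symm, mul_inv_cancel,
      Matrix.SpecialLinearGroup.coe_one]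
  -- the intertwining relation at the matrix level
  have hPP : ∀ g : G, Pm * blockInclusion (ρ₁ g : Matrix (Fin n) (Fin n) ℝ)
      = blockInclusion (ρ₂ g : Matrix (Fin n) (Fin n) ℝ) * Pm := by
    intro g
    have h2 := congrArg (fun M => M * Pm) (hP g)
    replace h2 : Pm * blockInclusion (ρ₁ g : Matrix (Fin n) (Fin n) ℝ) * Pim * Pm
        = blockInclusion (ρ₂ g : Matrix (Fin n) (Fin n) ℝ) * Pm := h2
    rwa [mul_assoc (Pm * blockInclusion _), hinv1, mul_one] at h2
  -- the intertwining relation at the vector level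
  have key : ∀ (g : G) (w : Fin (n + 1) → ℝ),
      Pm *ᵥ (blockInclusion ((ρ₁ g : Matrix (Fin n) (Fin n) ℝ)) *ᵥ w)
        = blockInclusion ((ρ₂ g : Matrix (Fin n) (Fin n) ℝ)) *ᵥ (Pm *ᵥ w) := by
    intro g w
    rw [mulVec_mulVec, mulVec_mulVec, hPP]
  -- basic linear maps
  set ι0 : (Fin n → ℝ) →ₗ[ℝ] (Fin (n + 1) → ℝ) :=
    Function.ExtendByZero.linearMap ℝ Fin.castSucc with hι0
  set πl : (Fin (n + 1) → ℝ) →ₗ[ℝ] (Fin n → ℝ) := LinearMap.funLeft ℝ ℝ Fin.castSucc with hπl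
  have hι_cast : ∀ (v : Fin n → ℝ) (j : Fin n), ι0 v j.castSucc = v j := by
    intro v j
    exact (Fin.castSucc_injective n).extend_apply v 0 j
  have hι_last : ∀ v : Fin n → ℝ, ι0 v (Fin.last n) = 0 := by
    intro v
    refine Function.extend_apply' v (0 : Fin (n + 1) → ℝ) (Fin.last n) ?_
    rintro ⟨a, ha⟩
    exact absurd ha (Fin.castSucc_lt_last a).ne
  have hπ_apply : ∀ (w : Fin (n + 1) → ℝ) (j : Fin n), πl w j = w j.castSucc := fun _ _ => rfl
  have hπι : ∀ v : Fin n → ℝ, πl (ι0 v) = v := by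
    intro v; funext j; rw [hπ_apply, hι_cast]
  -- blockInclusion interacts nicely with ι0 and πl
  have hbiι : ∀ (M : Matrix (Fin n) (Fin n) ℝ) (v : Fin n → ℝ),
      blockInclusion M *ᵥ ι0 v = ι0 (M *ᵥ v) := by
    intro M v
    funext i
    refine Fin.lastCases ?_ (fun j => ?_) i
    · rw [blockInclusion_mulVec_last, hι_last, hι_last]
    · rw [blockInclusion_mulVec_castSucc, hι_cast]
      congr 1
      funext k
      exact hι_cast v k
  have hπbi : ∀ (M : Matrix (Fin n) (Fin n) ℝ) (w : Fin (n + 1) → ℝ),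
      πl (blockInclusion M *ᵥ w) = M *ᵥ πl w := by
    intro M w
    funext j
    rw [hπ_apply, blockInclusion_mulVec_castSucc]
    rfl
  set eLast : Fin (n + 1) → ℝ := Pi.single (Fin.last n) 1 with heLast
  have hbi_eLast : ∀ M : Matrix (Fin n) (Fin n) ℝ, blockInclusion M *ᵥ eLast = eLast := by
    intro M
    funext i
    refine Fin.lastCases ?_ (fun j => ?_) i
    · rw [blockInclusion_mulVec_last]
    · rw [blockInclusion_mulVec_castSucc]
      have : eLast ∘ Fin.castSucc = (0 : Fin n → ℝ) := by
        funext k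
        exact Pi.single_eq_of_ne (Fin.castSucc_lt_last k).ne 1
      rw [this, Matrix.mulVec_zero]
      simp [heLast, Pi.single_eq_of_ne (Fin.castSucc_lt_last j).ne]
  -- the key linear maps extracted from P
  set Pl : (Fin (n + 1) → ℝ) →ₗ[ℝ] (Fin (n + 1) → ℝ) := Matrix.mulVecLin Pm with hPl
  set A : (Fin n → ℝ) →ₗ[ℝ] (Fin n → ℝ) := πl ∘ₗ Pl ∘ₗ ι0 with hA_def
  set c : (Fin n → ℝ) →ₗ[ℝ] ℝ := LinearMap.proj (Fin.last n) ∘ₗ Pl ∘ₗ ι0 with hc_def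
  set b : Fin n → ℝ := πl (Pl eLast) with hb_def
  have hA_apply : ∀ v : Fin n → ℝ, A v = πl (Pm *ᵥ ι0 v) := fun _ => rfl
  have hc_apply : ∀ v : Fin n → ℝ, c v = (Pm *ᵥ ι0 v) (Fin.last n) := fun _ => rfl
  -- equivariance
  have hA : ∀ (g : G) (v : Fin n → ℝ),
      A ((ρ₁ g : Matrix (Fin n) (Fin n) ℝ) *ᵥ v) = (ρ₂ g : Matrix (Fin n) (Fin n) ℝ) *ᵥ A v := by
    intro g v
    rw [hA_apply, hA_apply, ← hbiι, key, hπbi]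
  have hc : ∀ (g : G) (v : Fin n → ℝ), c ((ρ₁ g : Matrix (Fin n) (Fin n) ℝ) *ᵥ v) = c v := by
    intro g v
    rw [hc_apply, hc_apply, ← hbiι, key, blockInclusion_mulVec_last]
  have hb : ∀ g : G, (ρ₂ g : Matrix (Fin n) (Fin n) ℝ) *ᵥ b = b := by
    intro g
    have : Pl eLast = Pm *ᵥ eLast := rfl
    rw [hb_def, this, ← hπbi, ← key, hbi_eLast]
  -- injectivity and surjectivity inputs from invertibility of P
  have hPinj : ∀ w : Fin (n + 1) → ℝ, Pm *ᵥ w = 0 → w = 0 := by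
    intro w hw
    have : Pim *ᵥ (Pm *ᵥ w) = w := by
      rw [mulVec_mulVec, hinv1, Matrix.one_mulVec]
    rw [hw, Matrix.mulVec_zero] at this
    exact this.symm
  have hrec : ∀ w : Fin (n + 1) → ℝ, w = ι0 (πl w) + w (Fin.last n) • eLast := by
    intro w
    funext i
    refine Fin.lastCases ?_ (fun j => ?_) i
    · simp only [Pi.add_apply, Pi.smul_apply, hι_last, heLast, Pi.single_eq_same, smul_eq_mul,
        mul_one, zero_add]
    · simp only [Pi.add_apply, Pi.smul_apply, hι_cast, hπ_apply, heLast,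
        Pi.single_eq_of_ne (Fin.castSucc_lt_last j).ne 1, smul_eq_mul, mul_zero, add_zero]
  have hsur : ∀ y : Fin n → ℝ, ∃ (u : Fin n → ℝ) (t : ℝ), y = A u + t • b := by
    intro y
    set w : Fin (n + 1) → ℝ := Pim *ᵥ ι0 y with hw
    have hPw : Pm *ᵥ w = ι0 y := by
      rw [hw, mulVec_mulVec, hinv2, Matrix.one_mulVec]
    refine ⟨πl w, w (Fin.last n), ?_⟩
    have := congrArg πl hPw
    rw [hπι] at this
    rw [← this]
    conv_lhs => rw [hrec w]
    rw [Matrix.mulVec_add, Matrix.mulVec_smul, map_add, _root_.map_smul]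
    rfl
  have hkerc : ∀ v : Fin n → ℝ, A v = 0 → c v = 0 → v = 0 := by
    intro v hAv hcv
    have h0 : Pm *ᵥ ι0 v = 0 := by
      funext i
      refine Fin.lastCases ?_ (fun j => ?_) i
      · exact hcv
      · exact congrFun hAv j
    have := hPinj _ h0
    funext j
    rw [← hι_cast v j, this]
    rfl
  -- a bijective intertwiner
  have main : ∃ Q₀ : (Fin n → ℝ) →ₗ[ℝ] (Fin n → ℝ), Function.Bijective Q₀ ∧
      ∀ (g : G) (v : Fin n → ℝ), Q₀ ((ρ₁ g : Matrix (Fin n) (Fin n) ℝ) *ᵥ v)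
        = (ρ₂ g : Matrix (Fin n) (Fin n) ℝ) *ᵥ Q₀ v := by
    by_cases hinj : Function.Injective A
    · exact ⟨A, ⟨hinj, LinearMap.injective_iff_surjective.mp hinj⟩, hA⟩
    · -- A has nontrivial kernel
      have hker : LinearMap.ker A ≠ ⊥ := fun h => hinj (LinearMap.ker_eq_bot.mp h)
      obtain ⟨v₀, hv₀mem, hv₀⟩ := Submodule.exists_mem_ne_zero_of_ne_bot hker
      have hv₀A : A v₀ = 0 := hv₀mem
      have hcv₀ : c v₀ ≠ 0 := fun h => hv₀ (hkerc v₀ hv₀A h)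
      have hbrange : ∀ u : Fin n → ℝ, A u ≠ b := by
        intro u hu
        have hsurA : Function.Surjective A := by
          intro y
          obtain ⟨u', t, hy⟩ := hsur y
          exact ⟨u' + t • u, by rw [map_add, _root_.map_smul, hu, ← hy]⟩
        exact hinj (LinearMap.injective_iff_surjective.mpr hsurA)
      set Q₀ : (Fin n → ℝ) →ₗ[ℝ] (Fin n → ℝ) := A + c.smulRight ((c v₀)⁻¹ • b) with hQ₀
      have hQ₀_apply : ∀ v, Q₀ v = A v + c v • (c v₀)⁻¹ • b := fun _ => rfl
      have hQinj : Function.Injective Q₀ := by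
        rw [← LinearMap.ker_eq_bot, Submodule.eq_bot_iff]
        intro v hv
        have hv' : A v + c v • (c v₀)⁻¹ • b = 0 := hv
        by_cases hcv : c v = 0
        · rw [hcv, zero_smul, add_zero] at hv'
          exact hkerc v hv' hcv
        · exfalso
          apply hbrange ((-(c v * (c v₀)⁻¹))⁻¹ • v)
          rw [_root_.map_smul]
          have hAv : A v = -(c v * (c v₀)⁻¹) • b := by
            rw [neg_smul, mul_smul, eq_neg_iff_add_eq_zero]
            exact hv'
          rw [hAv, smul_smul, inv_mul_cancel₀]
          · rw [one_smul]
          · simp only [ne_eq, neg_eq_zero, mul_eq_zero, inv_eq_zero]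
            push_neg
            exact ⟨hcv, hcv₀⟩
      refine ⟨Q₀, ⟨hQinj, LinearMap.injective_iff_surjective.mp hQinj⟩, ?_⟩
      intro g v
      rw [hQ₀_apply, hQ₀_apply, hA, hc, Matrix.mulVec_add, Matrix.mulVec_smul,
        Matrix.mulVec_smul, hb]
  obtain ⟨Q₀, hQbij, hQeq⟩ := main
  set M₀ : Matrix (Fin n) (Fin n) ℝ := LinearMap.toMatrix' Q₀ with hM₀def
  have hM₀ : ∀ g : G, M₀ * (ρ₁ g : Matrix (Fin n) (Fin n) ℝ)
      = (ρ₂ g : Matrix (Fin n) (Fin n) ℝ) * M₀ := by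
    intro g
    have h1 : Q₀ ∘ₗ Matrix.toLin' ((ρ₁ g : Matrix (Fin n) (Fin n) ℝ))
        = Matrix.toLin' ((ρ₂ g : Matrix (Fin n) (Fin n) ℝ)) ∘ₗ Q₀ := by
      apply LinearMap.ext
      intro v
      simpa [Matrix.toLin'_apply] using hQeq g v
    have h2 := congrArg LinearMap.toMatrix' h1
    rwa [LinearMap.toMatrix'_comp, LinearMap.toMatrix'_comp, LinearMap.toMatrix'_toLin',
      LinearMap.toMatrix'_toLin'] at h2
  have hdet : M₀.det ≠ 0 := by
    rw [hM₀def, LinearMap.det_toMatrix']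
    intro h
    exact absurd (LinearMap.range_eq_top.mpr hQbij.2)
      (LinearMap.range_lt_top_of_det_eq_zero h).ne
  -- choose an n-th root to normalize the determinant
  have hroot : ∃ lam : ℝ, lam ^ n = (M₀.det)⁻¹ := by
    rcases le_or_gt 0 (M₀.det)⁻¹ with h | h
    · exact ⟨(M₀.det)⁻¹ ^ ((n : ℝ)⁻¹), Real.rpow_inv_natCast_pow h hn.ne'⟩
    · refine ⟨-((-(M₀.det)⁻¹) ^ ((n : ℝ)⁻¹)), ?_⟩
      rw [hodd.neg_pow, Real.rpow_inv_natCast_pow (by linarith) hn.ne', neg_neg]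
  obtain ⟨lam, hlam⟩ := hroot
  have hdetQ : (lam • M₀).det = 1 := by
    rw [Matrix.det_smul, Fintype.card_fin, hlam, inv_mul_cancel₀ hdet]
  refine ⟨⟨lam • M₀, hdetQ⟩, ?_⟩
  intro g
  refine mul_inv_eq_iff_eq_mul.mpr ?_
  apply Subtype.ext
  show (lam • M₀) * (ρ₁ g : Matrix (Fin n) (Fin n) ℝ)
      = (ρ₂ g : Matrix (Fin n) (Fin n) ℝ) * (lam • M₀)
  rw [smul_mul_assoc, hM₀ g, mul_smul_comm]
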